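/- Let $k$ be a positive integer, $b_1 < \cdots < b_k$ real numbers, and let each $h_i(x)$ and $g_i(x)$ be a finite linear combination of (possibly non-integer) power functions $x^\gamma$. If $\sum_{i=1}^k (h_i(x) + g_i(x)\ln x) e^{b_i x} = 0$ for Lebesgue-almost every $x$ in some nonempty interval $I \subset (0,\infty)$, then for all $x \neq 0$, $h_i(x) = 0$ and $g_i(x) = 0$ for every $i \in [k]$. -/

import Mathlib

open MeasureTheory
open scoped BigOperators

namespace Stmt10Aux

open Filter Real Topology

/-- A "monomial" `e^{βx} x^g (log x)^e`, indexed by a lex triple. -/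
noncomputable def MonL (t : ℝ ×ₗ (ℝ ×ₗ ℕ)) (x : ℝ) : ℝ :=
  Real.exp ((ofLex t).1 * x) * x ^ (ofLex (ofLex t).2).1 *
    Real.log x ^ (ofLex (ofLex t).2).2

lemma monL_toLex (β g : ℝ) (e : ℕ) (x : ℝ) :
    MonL (toLex (β, toLex (g, e))) x = Real.exp (β * x) * x ^ g * Real.log x ^ e := rfl

/-- Ratio of two monomials tends to `0` when the first is lexicographically smaller. -/
lemma mon_ratio (β g : ℝ) (e : ℕ) (β' g' : ℝ) (e' : ℕ)
    (h : β < β' ∨ β = β' ∧ (g < g' ∨ g = g' ∧ e < e')) :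
    Tendsto (fun x => (Real.exp (β * x) * x ^ g * Real.log x ^ e) /
      (Real.exp (β' * x) * x ^ g' * Real.log x ^ e')) atTop (nhds 0) := by
  have hev : ∀ᶠ x : ℝ in atTop, Real.exp 1 ≤ x := eventually_ge_atTop _
  have hnonneg : ∀ᶠ x : ℝ in atTop, 0 ≤ (Real.exp (β * x) * x ^ g * Real.log x ^ e) /
      (Real.exp (β' * x) * x ^ g' * Real.log x ^ e') := by
    filter_upwards [hev] with x hx
    have hx0 : (0:ℝ) < x := lt_of_lt_of_le (Real.exp_pos 1) hx
    have hlog0 : 0 ≤ Real.log x := by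
      have := (Real.le_log_iff_exp_le hx0).2 hx; linarith
    exact div_nonneg
      (mul_nonneg (mul_nonneg (Real.exp_pos _).le (Real.rpow_nonneg hx0.le _))
        (pow_nonneg hlog0 _))
      (mul_nonneg (mul_nonneg (Real.exp_pos _).le (Real.rpow_nonneg hx0.le _))
        (pow_nonneg hlog0 _))
  have hratio_eq : ∀ x : ℝ, 0 < x →
      (Real.exp (β * x) * x ^ g * Real.log x ^ e) /
        (Real.exp (β' * x) * x ^ g' * Real.log x ^ e') =
      Real.exp ((β - β') * x) * x ^ (g - g') * (Real.log x ^ e / Real.log x ^ e') := by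
    intro x hx
    rw [show (β - β') * x = β * x - β' * x by ring, Real.exp_sub, Real.rpow_sub hx,
      div_mul_div_comm, div_mul_div_comm]
  rcases h with hβ | ⟨rfl, h⟩
  · apply squeeze_zero' hnonneg
      (g := fun x => x ^ (g - g' + (e : ℝ)) * Real.exp (-(β' - β) * x))
    · filter_upwards [hev] with x hx
      have hx0 : (0:ℝ) < x := lt_of_lt_of_le (Real.exp_pos 1) hx
      have hlog1 : 1 ≤ Real.log x := (Real.le_log_iff_exp_le hx0).2 hx
      have hlog0 : 0 ≤ Real.log x := by linarith
      rw [hratio_eq x hx0]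
      have h1 : Real.log x ^ e / Real.log x ^ e' ≤ Real.log x ^ e :=
        div_le_self (pow_nonneg hlog0 _) (one_le_pow₀ hlog1)
      have h2 : Real.log x ^ e ≤ x ^ (e : ℝ) := by
        rw [← Real.rpow_natCast (Real.log x) e]
        exact Real.rpow_le_rpow hlog0
          (by nlinarith [Real.log_le_sub_one_of_pos hx0]) (Nat.cast_nonneg e)
      calc Real.exp ((β - β') * x) * x ^ (g - g') * (Real.log x ^ e / Real.log x ^ e')
          ≤ Real.exp ((β - β') * x) * x ^ (g - g') * x ^ (e : ℝ) := by
            refine mul_le_mul_of_nonneg_left (h1.trans h2) ?_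
            exact mul_nonneg (Real.exp_pos _).le (Real.rpow_nonneg hx0.le _)
        _ = x ^ (g - g' + (e : ℝ)) * Real.exp (-(β' - β) * x) := by
            rw [Real.rpow_add hx0, show -(β' - β) * x = (β - β') * x by ring]
            ring
    · exact tendsto_rpow_mul_exp_neg_mul_atTop_nhds_zero _ _ (by linarith)
  rcases h with hg | ⟨rfl, he⟩
  · apply squeeze_zero' hnonneg
      (g := fun x => (Real.log x) ^ ((e : ℝ)) * Real.exp (-(g' - g) * Real.log x))
    · filter_upwards [hev] with x hx
      have hx0 : (0:ℝ) < x := lt_of_lt_of_le (Real.exp_pos 1) hx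
      have hlog1 : 1 ≤ Real.log x := (Real.le_log_iff_exp_le hx0).2 hx
      have hlog0 : 0 ≤ Real.log x := by linarith
      rw [hratio_eq x hx0, sub_self, zero_mul, Real.exp_zero, one_mul]
      have h1 : Real.log x ^ e / Real.log x ^ e' ≤ Real.log x ^ e :=
        div_le_self (pow_nonneg hlog0 _) (one_le_pow₀ hlog1)
      have h2 : Real.exp (-(g' - g) * Real.log x) = x ^ (g - g') := by
        rw [Real.rpow_def_of_pos hx0, show Real.log x * (g - g') = -(g' - g) * Real.log x
          by ring]
      rw [h2, Real.rpow_natCast]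
      calc x ^ (g - g') * (Real.log x ^ e / Real.log x ^ e')
          ≤ x ^ (g - g') * Real.log x ^ e :=
            mul_le_mul_of_nonneg_left h1 (Real.rpow_nonneg hx0.le _)
        _ = Real.log x ^ e * x ^ (g - g') := mul_comm _ _
    · exact (tendsto_rpow_mul_exp_neg_mul_atTop_nhds_zero (e : ℝ) _
        (by linarith)).comp Real.tendsto_log_atTop
  · apply squeeze_zero' hnonneg (g := fun x => (Real.log x)⁻¹)
    · filter_upwards [hev] with x hx
      have hx0 : (0:ℝ) < x := lt_of_lt_of_le (Real.exp_pos 1) hx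
      have hlog1 : 1 ≤ Real.log x := (Real.le_log_iff_exp_le hx0).2 hx
      have hlogpos : 0 < Real.log x := by linarith
      rw [hratio_eq x hx0, sub_self, zero_mul, Real.exp_zero, one_mul, sub_self,
        Real.rpow_zero, one_mul]
      calc Real.log x ^ e / Real.log x ^ e'
          ≤ Real.log x ^ e / Real.log x ^ (e + 1) :=
            div_le_div_of_nonneg_left (pow_nonneg hlogpos.le _) (pow_pos hlogpos _)
              (pow_le_pow_right₀ hlog1 he)
        _ = (Real.log x)⁻¹ := by
            rw [pow_succ, div_mul_eq_div_div, div_self (pow_pos hlogpos e).ne', one_div]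
    · exact tendsto_inv_atTop_zero.comp Real.tendsto_log_atTop

/-- Generic linear-independence-at-infinity lemma. -/
lemma indep_aux {ι : Type*} [LinearOrder ι] [DecidableEq ι] (M : ι → ℝ → ℝ)
    (hM : ∀ s t : ι, s < t → Tendsto (fun x => M s x / M t x) atTop (nhds 0))
    (hMne : ∀ t : ι, ∀ᶠ x in atTop, M t x ≠ 0) :
    ∀ S : Finset ι, ∀ w : ι → ℝ,
      (∀ᶠ x in atTop, ∑ t ∈ S, w t * M t x = 0) → ∀ t ∈ S, w t = 0 := by
  intro S
  induction S using Finset.strongInduction with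
  | _ S ih =>
    intro w h t ht
    have hS : S.Nonempty := ⟨t, ht⟩
    have ht0m : S.max' hS ∈ S := S.max'_mem hS
    set t0 := S.max' hS with ht0
    have key0 : Tendsto (fun x => ∑ s ∈ S, w s * (M s x / M t0 x)) atTop (nhds (w t0)) := by
      have hwt0 : w t0 = ∑ s ∈ S, (if s = t0 then w s else 0) := by
        rw [Finset.sum_ite_eq' S t0 w, if_pos ht0m]
      rw [hwt0]
      refine tendsto_finset_sum _ fun s hs => ?_
      by_cases hst : s = t0
      · rw [if_pos hst, hst]
        refine Tendsto.congr' ?_ tendsto_const_nhds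
        filter_upwards [hMne t0] with x hx
        rw [div_self hx, mul_one]
      · rw [if_neg hst]
        have hlt : s < t0 := lt_of_le_of_ne (S.le_max' s hs) hst
        simpa using (hM s t0 hlt).const_mul (w s)
    have key1 : Tendsto (fun x => ∑ s ∈ S, w s * (M s x / M t0 x)) atTop (nhds 0) := by
      refine Tendsto.congr' ?_ tendsto_const_nhds
      filter_upwards [h] with x hx
      simp_rw [← mul_div_assoc]
      rw [← Finset.sum_div, hx, zero_div]
    have hw0 : w t0 = 0 := tendsto_nhds_unique key0 key1
    rcases eq_or_ne t t0 with rfl | hne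
    · exact hw0
    · refine ih (S.erase t0) (Finset.erase_ssubset ht0m) w ?_ t (Finset.mem_erase.2 ⟨hne, ht⟩)
      filter_upwards [h] with x hx
      rw [← Finset.add_sum_erase S _ ht0m, hw0, zero_mul, zero_add] at hx
      exact hx

/-- Core algebraic result: exponential-monomial independence on `(0, ∞)`. -/
theorem core (k : ℕ) (b : Fin k → ℝ) (hbinj : Function.Injective b)
    (m m' : Fin k → ℕ)
    (a : (i : Fin k) → Fin (m i) → ℝ) (γ : (i : Fin k) → Fin (m i) → ℝ)
    (c : (i : Fin k) → Fin (m' i) → ℝ) (δ : (i : Fin k) → Fin (m' i) → ℝ)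
    (hF : ∀ x : ℝ, 0 < x →
      ∑ i, ((∑ j, a i j * x ^ (γ i j)) + (∑ j, c i j * x ^ (δ i j)) * Real.log x)
        * Real.exp (b i * x) = 0) :
    ∀ x : ℝ, ∀ i,
      (∑ j, a i j * x ^ (γ i j)) = 0 ∧ (∑ j, c i j * x ^ (δ i j)) = 0 := by
  classical
  set w : ℝ ×ₗ (ℝ ×ₗ ℕ) → ℝ := fun t =>
      (if (ofLex (ofLex t).2).2 = 0 then
        ∑ i, ∑ j, (if b i = (ofLex t).1 ∧ γ i j = (ofLex (ofLex t).2).1 then a i j else 0)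
       else 0)
    + (if (ofLex (ofLex t).2).2 = 1 then
        ∑ i, ∑ j, (if b i = (ofLex t).1 ∧ δ i j = (ofLex (ofLex t).2).1 then c i j else 0)
       else 0) with hw
  have hwA : ∀ (i : Fin k) (g : ℝ),
      w (toLex (b i, toLex (g, 0))) = ∑ j, (if γ i j = g then a i j else 0) := by
    intro i g
    rw [hw]
    simp only [ofLex_toLex]
    norm_num
    rw [Finset.sum_eq_single_of_mem i (Finset.mem_univ i)]
    · exact Finset.sum_congr rfl fun j _ => by simp
    · intro i' _ hne
      exact Finset.sum_eq_zero fun j _ => if_neg fun hcon => hne (hbinj hcon.1)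
  have hwC : ∀ (i : Fin k) (g : ℝ),
      w (toLex (b i, toLex (g, 1))) = ∑ j, (if δ i j = g then c i j else 0) := by
    intro i g
    rw [hw]
    simp only [ofLex_toLex]
    norm_num
    rw [Finset.sum_eq_single_of_mem i (Finset.mem_univ i)]
    · exact Finset.sum_congr rfl fun j _ => by simp
    · intro i' _ hne
      exact Finset.sum_eq_zero fun j _ => if_neg fun hcon => hne (hbinj hcon.1)
  set Sa : Fin k → Finset (ℝ ×ₗ (ℝ ×ₗ ℕ)) := fun i =>
    ((Finset.univ.image (γ i)).image fun g => toLex (b i, toLex (g, 0))) ∪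
    ((Finset.univ.image (δ i)).image fun d => toLex (b i, toLex (d, 1))) with hSa
  set S : Finset (ℝ ×ₗ (ℝ ×ₗ ℕ)) := Finset.univ.biUnion Sa with hS
  have hfst : ∀ (i : Fin k) t, t ∈ Sa i → (ofLex t).1 = b i := by
    intro i t ht
    rw [hSa] at ht
    rcases Finset.mem_union.mp ht with h | h <;>
      obtain ⟨g, _, rfl⟩ := Finset.mem_image.mp h <;> simp
  have hdisj : Set.PairwiseDisjoint (↑(Finset.univ : Finset (Fin k))) Sa := by
    intro i _ i' _ hne
    refine Finset.disjoint_left.mpr fun t hti hti' =>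
      hne (hbinj ((hfst i t hti).symm.trans (hfst i' t hti')))
  have hthird : ∀ (i : Fin k) t,
      (t ∈ (Finset.univ.image (γ i)).image fun g => toLex (b i, toLex (g, 0))) →
      (ofLex (ofLex t).2).2 = 0 := by
    intro i t ht
    obtain ⟨g, _, rfl⟩ := Finset.mem_image.mp ht; simp
  have hthird' : ∀ (i : Fin k) t,
      (t ∈ (Finset.univ.image (δ i)).image fun d => toLex (b i, toLex (d, 1))) →
      (ofLex (ofLex t).2).2 = 1 := by
    intro i t ht
    obtain ⟨g, _, rfl⟩ := Finset.mem_image.mp ht; simp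
  have hMkey : ∀ x : ℝ, ∑ t ∈ S, w t * MonL t x =
      ∑ i, ((∑ j, a i j * x ^ (γ i j)) + (∑ j, c i j * x ^ (δ i j)) * Real.log x)
        * Real.exp (b i * x) := by
    intro x
    rw [hS, Finset.sum_biUnion hdisj]
    refine Finset.sum_congr rfl fun i _ => ?_
    rw [hSa]
    rw [Finset.sum_union (Finset.disjoint_left.mpr fun t h1 h2 => by
      have := hthird i t h1; have := hthird' i t h2; omega)]
    have hinjγ : ∀ g ∈ Finset.univ.image (γ i), ∀ g' ∈ Finset.univ.image (γ i),
        toLex (b i, toLex (g, (0:ℕ))) = toLex (b i, toLex (g', (0:ℕ))) → g = g' := by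
      intro g _ g' _ hgg'
      simpa using congrArg (fun t => (ofLex (ofLex t).2).1) hgg'
    have hinjδ : ∀ g ∈ Finset.univ.image (δ i), ∀ g' ∈ Finset.univ.image (δ i),
        toLex (b i, toLex (g, (1:ℕ))) = toLex (b i, toLex (g', (1:ℕ))) → g = g' := by
      intro g _ g' _ hgg'
      simpa using congrArg (fun t => (ofLex (ofLex t).2).1) hgg'
    rw [Finset.sum_image hinjγ, Finset.sum_image hinjδ]
    have hP : ∑ g ∈ Finset.univ.image (γ i),
        w (toLex (b i, toLex (g, 0))) * MonL (toLex (b i, toLex (g, 0))) x =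
        (∑ j, a i j * x ^ (γ i j)) * Real.exp (b i * x) := by
      calc ∑ g ∈ Finset.univ.image (γ i),
              w (toLex (b i, toLex (g, 0))) * MonL (toLex (b i, toLex (g, 0))) x
          = ∑ g ∈ Finset.univ.image (γ i), ∑ j,
              (if γ i j = g then a i j * (Real.exp (b i * x) * x ^ (γ i j)) else 0) := by
            refine Finset.sum_congr rfl fun g _ => ?_
            rw [hwA i g, monL_toLex, pow_zero, mul_one, Finset.sum_mul]
            refine Finset.sum_congr rfl fun j _ => ?_
            split_ifs with hcond
            · rw [hcond]
            · rw [zero_mul]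
        _ = ∑ j, ∑ g ∈ Finset.univ.image (γ i),
              (if γ i j = g then a i j * (Real.exp (b i * x) * x ^ (γ i j)) else 0) :=
            Finset.sum_comm
        _ = ∑ j, a i j * (Real.exp (b i * x) * x ^ (γ i j)) := by
            refine Finset.sum_congr rfl fun j _ => ?_
            rw [Finset.sum_ite_eq,
              if_pos (Finset.mem_image_of_mem (γ i) (Finset.mem_univ j))]
        _ = (∑ j, a i j * x ^ (γ i j)) * Real.exp (b i * x) := by
            rw [Finset.sum_mul]
            exact Finset.sum_congr rfl fun j _ => by ring
    have hQ : ∑ g ∈ Finset.univ.image (δ i),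
        w (toLex (b i, toLex (g, 1))) * MonL (toLex (b i, toLex (g, 1))) x =
        (∑ j, c i j * x ^ (δ i j)) * Real.log x * Real.exp (b i * x) := by
      calc ∑ g ∈ Finset.univ.image (δ i),
              w (toLex (b i, toLex (g, 1))) * MonL (toLex (b i, toLex (g, 1))) x
          = ∑ g ∈ Finset.univ.image (δ i), ∑ j,
              (if δ i j = g then
                c i j * (Real.exp (b i * x) * x ^ (δ i j) * Real.log x) else 0) := by
            refine Finset.sum_congr rfl fun g _ => ?_
            rw [hwC i g, monL_toLex, pow_one, Finset.sum_mul]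
            refine Finset.sum_congr rfl fun j _ => ?_
            split_ifs with hcond
            · rw [hcond, mul_assoc]
            · rw [zero_mul]
        _ = ∑ j, ∑ g ∈ Finset.univ.image (δ i),
              (if δ i j = g then
                c i j * (Real.exp (b i * x) * x ^ (δ i j) * Real.log x) else 0) :=
            Finset.sum_comm
        _ = ∑ j, c i j * (Real.exp (b i * x) * x ^ (δ i j) * Real.log x) := by
            refine Finset.sum_congr rfl fun j _ => ?_
            rw [Finset.sum_ite_eq,
              if_pos (Finset.mem_image_of_mem (δ i) (Finset.mem_univ j))]
        _ = (∑ j, c i j * x ^ (δ i j)) * Real.log x * Real.exp (b i * x) := by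
            rw [Finset.sum_mul, Finset.sum_mul]
            exact Finset.sum_congr rfl fun j _ => by ring
    rw [hP, hQ]
    ring
  have hMne : ∀ t : ℝ ×ₗ (ℝ ×ₗ ℕ), ∀ᶠ x in atTop, MonL t x ≠ 0 := by
    intro t
    filter_upwards [eventually_gt_atTop 1] with x hx
    have hx0 : (0:ℝ) < x := lt_trans one_pos hx
    exact (mul_pos (mul_pos (Real.exp_pos _) (Real.rpow_pos_of_pos hx0 _))
      (pow_pos (Real.log_pos hx) _)).ne'
  have hMlt : ∀ s t : ℝ ×ₗ (ℝ ×ₗ ℕ), s < t →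
      Tendsto (fun x => MonL s x / MonL t x) atTop (nhds 0) := by
    intro s t hst
    have h1 := Prod.Lex.lt_iff.mp hst
    apply mon_ratio
    rcases h1 with h1 | ⟨h1, h2⟩
    · exact Or.inl h1
    · refine Or.inr ⟨h1, ?_⟩
      have h3 := Prod.Lex.lt_iff.mp h2
      exact h3
  have hw0 : ∀ t ∈ S, w t = 0 := by
    refine indep_aux MonL hMlt hMne S w ?_
    filter_upwards [eventually_gt_atTop (0:ℝ)] with x hx
    rw [hMkey x]
    exact hF x hx
  intro x i
  constructor
  · calc ∑ j, a i j * x ^ (γ i j)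
        = ∑ j, ∑ g ∈ Finset.univ.image (γ i),
            (if γ i j = g then a i j * x ^ g else 0) := by
          refine Finset.sum_congr rfl fun j _ => ?_
          rw [Finset.sum_ite_eq,
            if_pos (Finset.mem_image_of_mem (γ i) (Finset.mem_univ j))]
      _ = ∑ g ∈ Finset.univ.image (γ i), ∑ j,
            (if γ i j = g then a i j * x ^ g else 0) := Finset.sum_comm
      _ = ∑ g ∈ Finset.univ.image (γ i),
            (∑ j, if γ i j = g then a i j else 0) * x ^ g := by
          refine Finset.sum_congr rfl fun g _ => ?_
          rw [Finset.sum_mul]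
          refine Finset.sum_congr rfl fun j _ => ?_
          split_ifs with hcond
          · rfl
          · rw [zero_mul]
      _ = 0 := by
          refine Finset.sum_eq_zero fun g hg => ?_
          have hmemS : toLex (b i, toLex (g, (0:ℕ))) ∈ S :=
            Finset.mem_biUnion.mpr ⟨i, Finset.mem_univ i,
              Finset.mem_union_left _ (Finset.mem_image_of_mem _ hg)⟩
          have h0 := hw0 _ hmemS
          rw [hwA i g] at h0
          rw [h0, zero_mul]
  · calc ∑ j, c i j * x ^ (δ i j)
        = ∑ j, ∑ g ∈ Finset.univ.image (δ i),
            (if δ i j = g then c i j * x ^ g else 0) := by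
          refine Finset.sum_congr rfl fun j _ => ?_
          rw [Finset.sum_ite_eq,
            if_pos (Finset.mem_image_of_mem (δ i) (Finset.mem_univ j))]
      _ = ∑ g ∈ Finset.univ.image (δ i), ∑ j,
            (if δ i j = g then c i j * x ^ g else 0) := Finset.sum_comm
      _ = ∑ g ∈ Finset.univ.image (δ i),
            (∑ j, if δ i j = g then c i j else 0) * x ^ g := by
          refine Finset.sum_congr rfl fun g _ => ?_
          rw [Finset.sum_mul]
          refine Finset.sum_congr rfl fun j _ => ?_
          split_ifs with hcond
          · rfl
          · rw [zero_mul]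
      _ = 0 := by
          refine Finset.sum_eq_zero fun g hg => ?_
          have hmemS : toLex (b i, toLex (g, (1:ℕ))) ∈ S :=
            Finset.mem_biUnion.mpr ⟨i, Finset.mem_univ i,
              Finset.mem_union_right _ (Finset.mem_image_of_mem _ hg)⟩
          have h0 := hw0 _ hmemS
          rw [hwC i g] at h0
          rw [h0, zero_mul]

end Stmt10Aux

open Filter Topology in
/-- Linear independence of (generalized power sums) + (generalized power sums)·ln x times
exponentials with strictly increasing rates: if
`∑ᵢ (hᵢ(x) + gᵢ(x) ln x) e^{bᵢ x} = 0` a.e. on a nonempty interval `(lo,hi) ⊂ (0,∞)`,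
where `hᵢ(x) = ∑ⱼ aᵢⱼ x^{γᵢⱼ}` and `gᵢ(x) = ∑ⱼ cᵢⱼ x^{δᵢⱼ}`, then `hᵢ(x) = gᵢ(x) = 0`
for every `x ≠ 0` and every `i`. -/
theorem stmt_10 (k : ℕ) (hk : 0 < k) (b : Fin k → ℝ) (hb : StrictMono b)
    (m m' : Fin k → ℕ)
    (a : (i : Fin k) → Fin (m i) → ℝ) (γ : (i : Fin k) → Fin (m i) → ℝ)
    (c : (i : Fin k) → Fin (m' i) → ℝ) (δ : (i : Fin k) → Fin (m' i) → ℝ)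
    (lo hi : ℝ) (hlo : 0 < lo) (hlh : lo < hi)
    (hzero : ∀ᵐ x ∂(volume.restrict (Set.Ioo lo hi)),
        ∑ i, ((∑ j, a i j * x ^ (γ i j)) + (∑ j, c i j * x ^ (δ i j)) * Real.log x)
            * Real.exp (b i * x) = 0) :
    ∀ x : ℝ, x ≠ 0 → ∀ i,
      (∑ j, a i j * x ^ (γ i j)) = 0 ∧ (∑ j, c i j * x ^ (δ i j)) = 0 := by
  classical
  set F : ℝ → ℝ := fun x =>
    ∑ i, ((∑ j, a i j * x ^ (γ i j)) + (∑ j, c i j * x ^ (δ i j)) * Real.log x)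
      * Real.exp (b i * x) with hFdef
  set G : ℝ → ℝ := fun t =>
    ∑ i, ((∑ j, a i j * Real.exp (t * γ i j)) +
      (∑ j, c i j * Real.exp (t * δ i j)) * t) * Real.exp (b i * Real.exp t) with hGdef
  have hGanal : ∀ t : ℝ, AnalyticAt ℝ G t := by
    intro t
    rw [hGdef]
    apply Finset.analyticAt_fun_sum
    intro i _
    apply AnalyticAt.mul
    · apply AnalyticAt.add
      · exact Finset.analyticAt_fun_sum _ fun j _ =>
          analyticAt_const.mul ((analyticAt_id.mul analyticAt_const).rexp)
      · exact (Finset.analyticAt_fun_sum _ fun j _ =>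
          analyticAt_const.mul ((analyticAt_id.mul analyticAt_const).rexp)).mul analyticAt_id
    · exact (analyticAt_const.mul analyticAt_rexp).rexp
  have hFG : ∀ x : ℝ, 0 < x → G (Real.log x) = F x := by
    intro x hx
    rw [hGdef, hFdef]
    simp only [Real.exp_log hx, ← Real.rpow_def_of_pos hx]
  have hcont : ∀ x : ℝ, 0 < x → ContinuousAt F x := by
    intro x hx
    have h1 : ContinuousAt (fun y => G (Real.log y)) x :=
      (hGanal (Real.log x)).continuousAt.comp (Real.continuousAt_log hx.ne')
    apply h1.congr
    filter_upwards [Ioi_mem_nhds hx] with y hy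
    exact hFG y hy
  have hIoo : ∀ x ∈ Set.Ioo lo hi, F x = 0 := by
    intro x hx
    by_contra hne
    have hev : ∀ᶠ y in 𝓝 x, F y ≠ 0 ∧ y ∈ Set.Ioo lo hi :=
      ((hcont x (lt_trans hlo hx.1)).eventually_ne hne).and (isOpen_Ioo.mem_nhds hx)
    obtain ⟨s, hsub, hsopen, hxs⟩ := eventually_nhds_iff.mp hev
    have hnull : volume ({y : ℝ | ¬ F y = 0} ∩ Set.Ioo lo hi) = 0 := by
      have h0 := ae_iff.mp hzero
      rw [Measure.restrict_apply' measurableSet_Ioo] at h0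
      exact h0
    have hzero' : volume s = 0 := by
      refine measure_mono_null ?_ hnull
      intro y hy
      exact ⟨(hsub y hy).1, (hsub y hy).2⟩
    exact (hsopen.measure_pos volume ⟨x, hxs⟩).ne' hzero'
  have hlog : Real.log lo < Real.log hi := Real.log_lt_log hlo hlh
  have hGzero : Set.EqOn G 0 Set.univ := by
    apply AnalyticOnNhd.eqOn_zero_of_preconnected_of_eventuallyEq_zero
      (fun t _ => hGanal t) isPreconnected_univ
      (Set.mem_univ ((Real.log lo + Real.log hi) / 2))
    have hmem : (Real.log lo + Real.log hi) / 2 ∈ Set.Ioo (Real.log lo) (Real.log hi) :=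
      ⟨by linarith, by linarith⟩
    filter_upwards [isOpen_Ioo.mem_nhds hmem] with t ht
    have hx1 : Real.exp t ∈ Set.Ioo lo hi := by
      constructor
      · rw [← Real.exp_log hlo]
        exact Real.exp_lt_exp.mpr ht.1
      · rw [← Real.exp_log (lt_trans hlo hlh)]
        exact Real.exp_lt_exp.mpr ht.2
    have h2 := hFG (Real.exp t) (Real.exp_pos t)
    rw [Real.log_exp] at h2
    simp only [Pi.zero_apply]
    rw [h2]
    exact hIoo _ hx1
  have hF0 : ∀ x : ℝ, 0 < x →
      ∑ i, ((∑ j, a i j * x ^ (γ i j)) + (∑ j, c i j * x ^ (δ i j)) * Real.log x)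
        * Real.exp (b i * x) = 0 := by
    intro x hx
    have h3 := hGzero (Set.mem_univ (Real.log x))
    rw [hFG x hx] at h3
    simpa using h3
  intro x hx i
  exact Stmt10Aux.core k b hb.injective m m' a γ c δ hF0 x i
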